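/- Let H be a finite group, A a faithful irreducible H-module, and G = A ⋊ H. For any elements a_1,...,a_d ∈ A spanning A over End_H(A) (d = dim_{End_H(A)} A), the subgroups H, H^{a_1}, ..., H^{a_d} of G satisfy H ∩ H^{a_1} ∩ ... ∩ H^{a_d} = C_H(a_1) ∩ ... ∩ C_H(a_d) = 1. -/
import Mathlib


namespace Stmt12

/-- The action of `H` on `A` by additive automorphisms, packaged as a homomorphism
`H →* MulAut (Multiplicative A)`, used to form the semidirect product `A ⋊ H`. -/
def mulAutOfSMul (H A : Type*) [Group H] [AddCommGroup A] [DistribMulAction H A] :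
    H →* MulAut (Multiplicative A) where
  toFun h :=
    { toFun := fun a => Multiplicative.ofAdd (h • a.toAdd)
      invFun := fun a => Multiplicative.ofAdd (h⁻¹ • a.toAdd)
      left_inv := fun a => by simp
      right_inv := fun a => by simp
      map_mul' := fun a b => by simp [smul_add, ofAdd_add] }
  map_one' := by ext a; simp
  map_mul' g h := by ext a; simp [mul_smul]

/-- Let `H` be a finite group, `A` a finite faithful irreducible
`H`-module, `G = A ⋊ H`, and `a₁, …, a_d ∈ A` a family spanning `A` over
`End_H(A)`.  Then `H ∩ H^{a₁} ∩ ⋯ ∩ H^{a_d} = C_H(a₁) ∩ ⋯ ∩ C_H(a_d) = 1`. -/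
theorem inf_conjugates_eq_bot
    (H A : Type*) [Group H] [Finite H] [AddCommGroup A] [Finite A] [Nontrivial A]
    [DistribMulAction H A] [FaithfulSMul H A]
    (hirr : ∀ W : AddSubgroup A, (∀ h : H, ∀ a ∈ W, h • a ∈ W) → W = ⊥ ∨ W = ⊤)
    (d : ℕ) (v : Fin d → A)
    (hspan : ∀ x : A, ∃ f : Fin d → (A →+ A),
      (∀ i, ∀ h : H, ∀ a : A, f i (h • a) = h • f i a) ∧ x = ∑ i, f i (v i)) :
    ((SemidirectProduct.inr.range : Subgroup (Multiplicative A ⋊[mulAutOfSMul H A] H)) ⊓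
        ⨅ i : Fin d,
          (SemidirectProduct.inr.range :
              Subgroup (Multiplicative A ⋊[mulAutOfSMul H A] H)).map
            (MulAut.conj (SemidirectProduct.inl (Multiplicative.ofAdd (v i)))⁻¹).toMonoidHom
      = ⊥) ∧
    ∀ h : H, (∀ i : Fin d, h • v i = v i) → h = 1 := by
  have key : ∀ h : H, (∀ i : Fin d, h • v i = v i) → h = 1 := by
    intro h hv
    apply eq_of_smul_eq_smul (α := A)
    intro x
    obtain ⟨f, hf, hx⟩ := hspan x
    rw [one_smul, hx]
    rw [Finset.smul_sum]
    exact Finset.sum_congr rfl fun i _ => by rw [← hf i h, hv i]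
  refine ⟨?_, key⟩
  rw [eq_bot_iff]
  intro x hx
  obtain ⟨hx1, hx2⟩ := hx
  obtain ⟨h, rfl⟩ := hx1
  replace hx2 := Subgroup.mem_iInf.mp hx2
  have hfix : ∀ i, h • v i = v i := by
    intro i
    have := hx2 i
    simp only [Subgroup.mem_map, MonoidHom.mem_range, MulEquiv.coe_toMonoidHom,
      MulAut.conj_inv_apply] at this
    obtain ⟨y, ⟨h', rfl⟩, hy⟩ := this
    have hl := congrArg SemidirectProduct.left hy
    have hr := congrArg SemidirectProduct.right hy
    simp [SemidirectProduct.mul_left, SemidirectProduct.mul_right,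
      SemidirectProduct.inv_left, SemidirectProduct.inv_right] at hl hr
    rw [hr] at hl
    have h2 : Multiplicative.ofAdd (h • v i) * (Multiplicative.ofAdd (v i))⁻¹ = 1 := by
      simpa [mulAutOfSMul, mul_comm] using hl
    exact Multiplicative.ofAdd.injective (mul_inv_eq_one.mp h2)
  have := key h hfix
  subst this
  simp


end Stmt12
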